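/- Any quasi-Clifford algebraic curvature tensor with at most one of the Hurwitz-like constants cᵢ equal to zero is Jacobi-dual. That is, if R = μ₀R⁰ + Σ_{i=1}^m μᵢR^{Jᵢ} is quasi-Clifford with constants c₁,…,c_m of which at most one equals 0, then for all X, Y ∈ V with ε_X ≠ 0, if Y is an eigenvector of 𝒥_X then X is an eigenvector of 𝒥_Y. -/

import Mathlib

open Module Finset

/-- The algebraic curvature tensor `R⁰` of constant sectional curvature one. -/
def R0 {V : Type*} [AddCommGroup V] [Module ℝ V] (g : LinearMap.BilinForm ℝ V)
    (X Y Z W : V) : ℝ :=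
  g Y Z * g X W - g X Z * g Y W

/-- The algebraic curvature tensor `R^J` generated by a `g`-skew-adjoint endomorphism `J`. -/
def RJ {V : Type*} [AddCommGroup V] [Module ℝ V] (g : LinearMap.BilinForm ℝ V)
    (J : V →ₗ[ℝ] V) (X Y Z W : V) : ℝ :=
  g (J X) Z * g (J Y) W - g (J Y) Z * g (J X) W + 2 * g (J X) Y * g (J Z) W
/-- any quasi-Clifford algebraic curvature tensor with at most one `cᵢ = 0`
is Jacobi-dual. -/
theorem quasiClifford_jacobiDual_of_at_most_one_zero
    {V : Type*} [AddCommGroup V] [Module ℝ V] [FiniteDimensional ℝ V]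
    (g : LinearMap.BilinForm ℝ V) (hsymm : ∀ x y, g x y = g y x) (hnd : g.Nondegenerate)
    {m : ℕ} (μ₀ : ℝ) (μ c : Fin m → ℝ) (J : Fin m → V →ₗ[ℝ] V)
    (hskew : ∀ i, ∀ x y : V, g (J i x) y = - g x (J i y))
    (hhur : ∀ i j, J i ∘ₗ J j + J j ∘ₗ J i
      = ((if i = j then 2 * c i else 0 : ℝ) • LinearMap.id : V →ₗ[ℝ] V))
    (R : V → V → V → V → ℝ)
    (hR : ∀ X Y Z W, R X Y Z W = μ₀ * R0 g X Y Z W + ∑ i, μ i * RJ g (J i) X Y Z W)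
    (Jac : V → V →ₗ[ℝ] V)
    (hJac : ∀ X Y Z, g (Jac X Y) Z = R Y X X Z)
    (hone : ∀ i j : Fin m, c i = 0 → c j = 0 → i = j) :
    ∀ X Y : V, g X X ≠ 0 →
      (∃ lam : ℝ, Module.End.HasEigenvector (Jac X) lam Y) →
      ∃ lam : ℝ, Module.End.HasEigenvector (Jac Y) lam X := by
  -- Consequences of the Hurwitz-like relations
  have hhur' : ∀ i j (x : V), J i (J j x) + J j (J i x) = (if i = j then 2 * c i else 0) • x := by
    intro i j x
    have h := congrArg (fun f : V →ₗ[ℝ] V => f x) (hhur i j)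
    simpa only [LinearMap.add_apply, LinearMap.comp_apply, LinearMap.smul_apply,
      LinearMap.id_apply] using h
  have hJJ : ∀ i (x : V), J i (J i x) = c i • x := by
    intro i x
    have h := hhur' i i x
    simp only [if_true] at h
    have h2 : (2:ℝ) • J i (J i x) = (2:ℝ) • (c i • x) := by
      rw [two_smul, h, mul_smul]
    exact smul_right_injective V two_ne_zero h2
  have hanti : ∀ i j, i ≠ j → ∀ x : V, J i (J j x) = - J j (J i x) := by
    intro i j hij x
    have h := hhur' i j x
    rw [if_neg hij, zero_smul] at h
    exact eq_neg_of_add_eq_zero_left h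
  -- skewness facts
  have hgJX : ∀ i (x : V), g (J i x) x = 0 := by
    intro i x
    have h1 := hskew i x x
    have h2 := hsymm x (J i x)
    linarith
  have hXJ : ∀ i (x : V), g x (J i x) = 0 := by
    intro i x; rw [hsymm]; exact hgJX i x
  have hJiJj : ∀ i j (x : V), i ≠ j → g (J i x) (J j x) = 0 := by
    intro i j x hij
    have h1 : g (J i x) (J j x) = - g x (J i (J j x)) := hskew i x (J j x)
    rw [hanti i j hij x, map_neg, neg_neg] at h1
    have h3 : g (J j x) (J i x) = - g x (J j (J i x)) := hskew j x (J i x)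
    have h4 : g (J i x) (J j x) = g (J j x) (J i x) := hsymm _ _
    linarith
  have hJiJi : ∀ i (x : V), g (J i x) (J i x) = - (c i * g x x) := by
    intro i x
    have h1 : g (J i x) (J i x) = - g x (J i (J i x)) := hskew i x (J i x)
    rw [hJJ i x, map_smul] at h1
    simpa using h1
  -- The explicit formula for the Jacobi operator
  have hform : ∀ P Q : V, Jac P Q =
      (μ₀ * g P P) • Q - (μ₀ * g P Q) • P - ∑ i, (3 * μ i * g Q (J i P)) • J i P := by
    intro P Q
    rw [← sub_eq_zero]
    apply hnd.1
    intro Z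
    have h := hJac P Q Z
    rw [hR] at h
    simp only [R0, RJ] at h
    simp only [map_sub, map_smul, map_sum, LinearMap.sub_apply, LinearMap.smul_apply,
      LinearMap.sum_apply, smul_eq_mul, h]
    have hQP : g Q P = g P Q := hsymm Q P
    have e2 : ∀ i, g (J i Q) P = - g Q (J i P) := by
      intro i
      have h1 := hskew i Q P
      have h2 : g Q (J i P) = g (J i P) Q := hsymm Q (J i P)
      have h3 : g (J i P) Q = - g P (J i Q) := hskew i P Q
      have h4 : g P (J i Q) = g (J i Q) P := hsymm P (J i Q)
      linarith
    have hsum : ∑ i, μ i * (g (J i Q) P * g (J i P) Z - g (J i P) P * g (J i Q) Z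
        + 2 * g (J i Q) P * g (J i P) Z)
        = -∑ i, 3 * μ i * g Q (J i P) * g (J i P) Z := by
      rw [← Finset.sum_neg_distrib]
      refine Finset.sum_congr rfl fun i _ => ?_
      rw [e2 i, hgJX i P]
      ring
    rw [hsum, hQP]
    ring
  -- the double sum collapse lemma
  have hdbl : ∀ (w : Fin m → ℝ) (x : V),
      ∑ i, w i • ∑ j, w j • J i (J j x) = (∑ i, w i ^ 2 * c i) • x := by
    intro w x
    set S := ∑ i, w i • ∑ j, w j • J i (J j x) with hS
    have hs1 : S = ∑ i, ∑ j, (w i * w j) • J i (J j x) := by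
      rw [hS]
      refine Finset.sum_congr rfl fun i _ => ?_
      rw [Finset.smul_sum]
      exact Finset.sum_congr rfl fun j _ => by rw [smul_smul]
    have hSS : S + S = ∑ i, ∑ j, ((w i * w j) * (if i = j then 2 * c i else 0)) • x := by
      nth_rewrite 2 [hs1]
      rw [Finset.sum_comm (s := Finset.univ) (t := Finset.univ)
        (f := fun i j => (w i * w j) • J i (J j x))]
      rw [hs1, ← Finset.sum_add_distrib]
      refine Finset.sum_congr rfl fun i _ => ?_
      rw [← Finset.sum_add_distrib]
      refine Finset.sum_congr rfl fun j _ => ?_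
      rw [mul_comm (w j) (w i), ← smul_add, hhur' i j x, smul_smul]
    have hinner : ∀ i : Fin m, ∑ j, ((w i * w j) * (if i = j then 2 * c i else 0)) • x
        = (w i ^ 2 * (2 * c i)) • x := by
      intro i
      rw [Finset.sum_eq_single i]
      · rw [if_pos rfl]; ring_nf
      · intro j _ hji
        rw [if_neg (Ne.symm hji)]
        simp
      · simp
    rw [Finset.sum_congr rfl (fun i _ => hinner i)] at hSS
    have h2 : (2:ℝ) • S = (2:ℝ) • ((∑ i, w i ^ 2 * c i) • x) := by
      rw [two_smul, hSS, smul_smul, Finset.mul_sum, ← Finset.sum_smul]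
      congr 1
      exact Finset.sum_congr rfl fun i _ => by ring
    exact smul_right_injective V two_ne_zero h2
  -- Main argument
  intro X Y hX hEig
  obtain ⟨lam, hY⟩ := hEig
  have hY0 : Y ≠ 0 := hY.2
  have hXY : Jac X Y = lam • Y := hY.apply_eq_smul
  have hX0 : X ≠ 0 := fun h => hX (by rw [h]; simp)
  set a : Fin m → ℝ := fun i => g Y (J i X) with ha
  set κ : ℝ := lam - μ₀ * g X X with hκdef
  have hE : κ • Y = -((μ₀ * g X Y) • X) - ∑ i, (3 * μ i * a i) • J i X := by
    have h := hform X Y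
    rw [hXY] at h
    rw [hκdef, sub_smul, h]
    module
  have hXJY : ∀ i, g X (J i Y) = - a i := by
    intro i
    have h1 := hskew i X Y
    have h2 : g (J i X) Y = g Y (J i X) := hsymm _ _
    have h3 : a i = g Y (J i X) := rfl
    linarith
  have hJacYX : Jac Y X = (μ₀ * g Y Y) • X - (μ₀ * g X Y) • Y
      + ∑ i, (3 * μ i * a i) • J i Y := by
    have hs : ∑ i, (3 * μ i * g X (J i Y)) • J i Y = -∑ i, (3 * μ i * a i) • J i Y := by
      rw [← Finset.sum_neg_distrib]
      refine Finset.sum_congr rfl fun i _ => ?_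
      rw [hXJY i, show 3 * μ i * -a i = -(3 * μ i * a i) by ring, neg_smul]
    rw [hform Y X, hs, hsymm Y X]
    module
  by_cases hκ : κ = 0
  · -- the case κ = 0
    rw [hκ, zero_smul] at hE
    have hE' : (μ₀ * g X Y) • X + ∑ i, (3 * μ i * a i) • J i X = 0 := by
      linear_combination (norm := module) hE
    have hp : μ₀ * g X Y = 0 := by
      have h := congrArg (fun v => g v X) hE'
      simp only [map_add, map_smul, map_sum, LinearMap.add_apply, LinearMap.smul_apply,
        LinearMap.sum_apply, smul_eq_mul, map_zero, LinearMap.zero_apply, hgJX,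
        mul_zero, Finset.sum_const_zero, add_zero] at h
      exact (mul_eq_zero.mp h).resolve_right hX
    have hc : ∀ j, μ j * a j * c j = 0 := by
      intro j
      have h := congrArg (fun v => g v (J j X)) hE'
      simp only [map_add, map_smul, map_sum, LinearMap.add_apply, LinearMap.smul_apply,
        LinearMap.sum_apply, smul_eq_mul, map_zero, LinearMap.zero_apply, hXJ,
        mul_zero, zero_add] at h
      rw [Finset.sum_eq_single j
        (fun i _ hij => by rw [hJiJj i j X hij, mul_zero]) (by simp)] at h
      rw [hJiJi j X] at h
      have h2 : (μ j * a j * c j) * g X X = 0 := by linear_combination (-1/3 : ℝ) * h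
      exact (mul_eq_zero.mp h2).resolve_right hX
    have hall : ∀ i, μ i * a i = 0 := by
      by_contra hcon
      push_neg at hcon
      obtain ⟨i₀, hi₀⟩ := hcon
      have hc0 : c i₀ = 0 := (mul_eq_zero.mp (hc i₀)).resolve_left hi₀
      have hothers : ∀ i, i ≠ i₀ → μ i * a i = 0 := by
        intro i hi
        by_contra hii
        exact hi (hone i i₀ ((mul_eq_zero.mp (hc i)).resolve_left hii) hc0)
      have hsum0 : ∑ i, (3 * μ i * a i) • J i X = 0 := by
        have h := hE'
        rw [hp, zero_smul, zero_add] at h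
        exact h
      rw [Finset.sum_eq_single i₀
        (fun i _ hi => by
          rw [show (3:ℝ) * μ i * a i = 3 * (μ i * a i) by ring, hothers i hi,
            mul_zero, zero_smul])
        (by simp)] at hsum0
      rcases smul_eq_zero.mp hsum0 with h | h
      · exact hi₀ (by linear_combination (1/3 : ℝ) * h)
      · apply hi₀
        have ha0 : a i₀ = 0 := by
          show g Y (J i₀ X) = 0
          rw [h, map_zero]
        rw [ha0, mul_zero]
    refine ⟨μ₀ * g Y Y, Module.End.mem_eigenspace_iff.mpr ?_, hX0⟩
    rw [hJacYX, hp, zero_smul, sub_zero,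
      Finset.sum_congr rfl (fun i (_ : i ∈ Finset.univ) => by
        rw [show (3:ℝ) * μ i * a i = 3 * (μ i * a i) by ring, hall i, mul_zero, zero_smul]),
      Finset.sum_const_zero, add_zero]
  · -- the case κ ≠ 0
    have hJY : ∀ i, κ • J i Y
        = -((μ₀ * g X Y) • J i X) - ∑ j, (3 * μ j * a j) • J i (J j X) := by
      intro i
      have h := congrArg (J i) hE
      simp only [map_smul, map_sub, map_neg, map_sum] at h
      exact h
    have hdbl2 := hdbl (fun i => 3 * μ i * a i) X
    have hsplit : ∑ i, (3 * μ i * a i) • (κ • J i Y)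
        = -((μ₀ * g X Y) • ∑ i, (3 * μ i * a i) • J i X)
          - (∑ i, (3 * μ i * a i) ^ 2 * c i) • X := by
      rw [Finset.sum_congr rfl (fun i (_ : i ∈ Finset.univ) => congrArg _ (hJY i))]
      rw [Finset.sum_congr rfl (fun i (_ : i ∈ Finset.univ) => by
        rw [smul_sub, smul_neg, smul_comm (3 * μ i * a i) (μ₀ * g X Y) (J i X)])]
      rw [Finset.sum_sub_distrib, Finset.sum_neg_distrib, ← Finset.smul_sum, hdbl2]
    have hkey : κ • Jac Y X
        = (κ * (μ₀ * g Y Y) + (μ₀ * g X Y) ^ 2 - ∑ i, (3 * μ i * a i) ^ 2 * c i) • X := by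
      rw [hJacYX, smul_add, smul_sub]
      have hs : κ • ∑ i, (3 * μ i * a i) • J i Y = ∑ i, (3 * μ i * a i) • (κ • J i Y) := by
        rw [Finset.smul_sum]
        exact Finset.sum_congr rfl fun i _ => smul_comm _ _ _
      rw [hs, hsplit]
      have hEs : ∑ i, (3 * μ i * a i) • J i X = -((μ₀ * g X Y) • X) - κ • Y := by
        linear_combination (norm := module) hE
      rw [hEs]
      module
    refine ⟨(κ * (μ₀ * g Y Y) + (μ₀ * g X Y) ^ 2 - ∑ i, (3 * μ i * a i) ^ 2 * c i) / κ,
      Module.End.mem_eigenspace_iff.mpr ?_, hX0⟩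
    have h := congrArg (fun v => κ⁻¹ • v) hkey
    simp only [smul_smul, inv_mul_cancel₀ hκ, one_smul] at h
    rw [div_eq_inv_mul]
    exact h
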